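/- Let r be a natural number, f = q/(1-(-1)^{r+1}q) ∈ ℚ[[q]], and δ = q·d/dq. For every m ≥ 0, the power series f^{m+1} lies in the ℚ-linear span of {δ^j f : 0 ≤ j ≤ m}. -/

import Mathlib

/-- The Euler derivation δ = q·d/dq on formal power series. -/
noncomputable def eulerOp (g : PowerSeries ℚ) : PowerSeries ℚ :=
  PowerSeries.mk fun d => (d : ℚ) * PowerSeries.coeff d g

/-- The basic extremal series f = Σ_{d≥1} (-1)^{(d-1)(r+1)} q^d = q/(1-(-1)^{r+1}q). -/
noncomputable def fSer (r : ℕ) : PowerSeries ℚ :=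
  PowerSeries.mk fun d => if d = 0 then 0 else ((-1 : ℚ)) ^ ((d - 1) * (r + 1))

open PowerSeries

lemma eulerOp_eq (g : PowerSeries ℚ) : eulerOp g = X * d⁄dX ℚ g := by
  ext d
  cases d with
  | zero => simp [eulerOp]
  | succ n =>
    rw [coeff_succ_X_mul, coeff_derivative]
    simp [eulerOp]
    ring

/-- eulerOp as a linear map. -/
noncomputable def eulerOpL : PowerSeries ℚ →ₗ[ℚ] PowerSeries ℚ where
  toFun := eulerOp
  map_add' a b := by simp [eulerOp_eq, map_add, mul_add]
  map_smul' c a := by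
    simp only [eulerOp_eq, RingHom.id_apply, Derivation.map_smul, mul_smul_comm]

lemma eulerOp_mul (a b : PowerSeries ℚ) :
    eulerOp (a * b) = eulerOp a * b + a * eulerOp b := by
  simp only [eulerOp_eq, Derivation.leibniz, smul_eq_mul]
  ring

lemma unit_mul_fSer (r : ℕ) :
    (1 - PowerSeries.C ((-1 : ℚ) ^ (r + 1)) * X) * fSer r = X := by
  ext d
  rw [sub_mul, one_mul, mul_assoc, map_sub]
  cases d with
  | zero => simp [fSer]
  | succ n =>
    rw [PowerSeries.coeff_C_mul, coeff_succ_X_mul]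
    cases n with
    | zero => simp [fSer]
    | succ k =>
      simp only [fSer, coeff_mk, Nat.succ_ne_zero, if_neg, coeff_X]
      have h1 : (k + 1 + 1 - 1) * (r + 1) = (r + 1) + k * (r + 1) := by
        show (k + 1) * (r + 1) = (r + 1) + k * (r + 1); ring
      have h2 : (k + 1 - 1) * (r + 1) = k * (r + 1) := rfl
      rw [h1, h2, pow_add]
      simp

lemma eulerOp_fSer (r : ℕ) :
    eulerOp (fSer r) =
      fSer r + PowerSeries.C ((-1 : ℚ) ^ (r + 1)) * (fSer r) ^ 2 := by
  set ε : ℚ := (-1 : ℚ) ^ (r + 1)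
  set u : PowerSeries ℚ := 1 - PowerSeries.C ε * X with hu_def
  have hu : u * fSer r = X := unit_mul_fSer r
  have hu0 : u ≠ 0 := by
    intro h
    have := congrArg (PowerSeries.constantCoeff) h
    simp [hu_def] at this
  have hune : u ^ 2 ≠ 0 := pow_ne_zero 2 hu0
  apply mul_left_cancel₀ hune
  -- derivative of hu
  have hd : d⁄dX ℚ (u * fSer r) = (1 : PowerSeries ℚ) := by
    rw [hu]; exact PowerSeries.derivative_X
  rw [Derivation.leibniz] at hd
  have hdu : d⁄dX ℚ u = -(PowerSeries.C ε) := by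
    simp [hu_def, Derivation.leibniz]
  rw [hdu] at hd
  simp only [smul_eq_mul] at hd
  -- hd : u * d⁄dX (fSer r) + fSer r * (-(C ε)) = 1
  have hf' : u * d⁄dX ℚ (fSer r) = 1 + PowerSeries.C ε * fSer r := by
    linear_combination hd
  calc u ^ 2 * eulerOp (fSer r) = X * (u * (u * d⁄dX ℚ (fSer r))) := by
        rw [eulerOp_eq]; ring
    _ = X * (u * (1 + PowerSeries.C ε * fSer r)) := by rw [hf']
    _ = X * u + PowerSeries.C ε * X * (u * fSer r) := by ring
    _ = X * u + PowerSeries.C ε * X * X := by rw [hu]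
    _ = u ^ 2 * (fSer r + PowerSeries.C ε * fSer r ^ 2) := by
        have : u ^ 2 * (fSer r + PowerSeries.C ε * fSer r ^ 2)
            = u * (u * fSer r) + PowerSeries.C ε * (u * fSer r) * (u * fSer r) := by
          ring
        rw [this, hu]; ring

lemma eulerOp_fSer_pow (r n : ℕ) :
    eulerOp (fSer r ^ n) =
      PowerSeries.C (n : ℚ) * fSer r ^ n
        + PowerSeries.C (n : ℚ) * PowerSeries.C ((-1 : ℚ) ^ (r + 1))
          * fSer r ^ (n + 1) := by
  induction n with
  | zero =>
    have : eulerOp (1 : PowerSeries ℚ) = 0 := by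
      rw [eulerOp_eq]; simp
    simp [this]
  | succ k ih =>
    have : fSer r ^ (k + 1) = fSer r ^ k * fSer r := by ring
    rw [this, eulerOp_mul, ih, eulerOp_fSer]
    push_cast [map_add, map_one]
    ring

theorem stmt_5 (r m : ℕ) :
    (fSer r) ^ (m + 1) ∈
      Submodule.span ℚ {g : PowerSeries ℚ | ∃ j ≤ m, g = eulerOp^[j] (fSer r)} := by
  induction m with
  | zero =>
    apply Submodule.subset_span
    exact ⟨0, le_refl 0, by simp⟩
  | succ n ih =>
    set ε : ℚ := (-1 : ℚ) ^ (r + 1) with hε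
    set S : ℕ → Submodule ℚ (PowerSeries ℚ) :=
      fun k => Submodule.span ℚ {g : PowerSeries ℚ | ∃ j ≤ k, g = eulerOp^[j] (fSer r)}
      with hS
    have hmono : S n ≤ S (n + 1) := by
      apply Submodule.span_mono
      rintro g ⟨j, hj, rfl⟩
      exact ⟨j, hj.trans (Nat.le_succ n), rfl⟩
    have hEuler : eulerOp (fSer r ^ (n + 1)) ∈ S (n + 1) := by
      have h1 : eulerOpL (fSer r ^ (n + 1)) ∈
          Submodule.span ℚ (eulerOpL '' {g : PowerSeries ℚ | ∃ j ≤ n, g = eulerOp^[j] (fSer r)}) :=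
        Submodule.apply_mem_span_image_of_mem_span eulerOpL ih
      refine Submodule.span_le.mpr ?_ h1
      rintro g ⟨h, ⟨j, hj, rfl⟩, rfl⟩
      apply Submodule.subset_span
      refine ⟨j + 1, by omega, ?_⟩
      rw [Function.iterate_succ_apply']
      rfl
    have hε2 : ε * ε = 1 := by
      rw [hε, ← pow_add]
      have : (r + 1) + (r + 1) = 2 * (r + 1) := by ring
      rw [this, pow_mul]; norm_num
    have hkey : fSer r ^ (n + 1 + 1) =
        (((n : ℚ) + 1)⁻¹ * ε) • eulerOp (fSer r ^ (n + 1))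
          - ε • fSer r ^ (n + 1) := by
      have hE := eulerOp_fSer_pow r (n + 1)
      push_cast at hE
      rw [smul_eq_C_mul, smul_eq_C_mul, hE, map_mul]
      have hn0 : ((n : ℚ) + 1) ≠ 0 := by positivity
      have h1 : (PowerSeries.C) (((n:ℚ) + 1)⁻¹) * (PowerSeries.C) ((n:ℚ) + 1) = 1 := by
        rw [← map_mul, inv_mul_cancel₀ hn0, map_one]
      have h2 : (PowerSeries.C) ε * (PowerSeries.C) ((-1:ℚ) ^ (r + 1)) = 1 := by
        rw [← hε, ← map_mul, hε2, map_one]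
      linear_combination
        (-(PowerSeries.C ε * fSer r ^ (n + 1)) - fSer r ^ (n + 1 + 1)) * h1
        - fSer r ^ (n + 1 + 1) * (PowerSeries.C (((n:ℚ) + 1)⁻¹) * PowerSeries.C ((n:ℚ) + 1)) * h2
    rw [hkey]
    exact Submodule.sub_mem _
      (Submodule.smul_mem _ _ hEuler)
      (Submodule.smul_mem _ _ (hmono ih))
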